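/- Let 1 ≤ γ ≤ β be positive integers with β odd, and let p, n be positive integers with gcd(p,n) = 1. Then ∏_{k=1}^{βn-1} ( 2 − e^{2πi p k/(βn)} − e^{2πi (γ n + p) k/(βn)} ) = n·2^{βn−1} ∏_{k=1}^{(β−1)/2} ( 1 − 2 cos(2π(p + γn/2)k/β) cos^n(πγk/β) + cos^{2n}(πγk/β) ). (By the matrix tree theorem the left-hand side is the number of spanning trees in the two-generated directed circulant graph on βn vertices with generators p and γn + p.) -/

import Mathlib

open Finset Real
open Polynomial

lemma nthRootsFinset_eq_image {n : ℕ} {ζ : ℂ} (hn : 0 < n) (hζ : IsPrimitiveRoot ζ n) :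
    nthRootsFinset n (1 : ℂ) = (Finset.range n).image (ζ ^ ·) := by
  symm
  apply Finset.eq_of_subset_of_card_le
  · intro z hz
    simp only [Finset.mem_image, Finset.mem_range] at hz
    obtain ⟨j, _, rfl⟩ := hz
    exact (Polynomial.mem_nthRootsFinset hn (1 : ℂ)).2 (by rw [← pow_mul, mul_comm, pow_mul, hζ.pow_eq_one, one_pow])
  · rw [hζ.card_nthRootsFinset, Finset.card_image_of_injOn hζ.injOn_pow, Finset.card_range]

lemma prod_X_sub_pow {n : ℕ} {ζ : ℂ} (hn : 0 < n) (hζ : IsPrimitiveRoot ζ n) :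
    ∏ j ∈ Finset.range n, (X - C (ζ ^ j)) = X ^ n - 1 := by
  rw [X_pow_sub_one_eq_prod hn hζ, nthRootsFinset_eq_image hn hζ,
    Finset.prod_image (fun i hi j hj h => hζ.injOn_pow (by simpa using hi) (by simpa using hj) h)]

lemma prod_sub_pow {n : ℕ} {ζ : ℂ} (hn : 0 < n) (hζ : IsPrimitiveRoot ζ n) (y : ℂ) :
    ∏ j ∈ Finset.range n, (y - ζ ^ j) = y ^ n - 1 := by
  have := congrArg (Polynomial.eval y) (prod_X_sub_pow hn hζ)
  simpa [Polynomial.eval_prod] using this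

lemma prod_one_sub_mul_pow {n : ℕ} {ζ : ℂ} (hn : 0 < n) (hζ : IsPrimitiveRoot ζ n) (x : ℂ) :
    ∏ j ∈ Finset.range n, (1 - x * ζ ^ j) = 1 - x ^ n := by
  rcases eq_or_ne x 0 with rfl | hx
  · simp [zero_pow hn.ne']
  · have : ∀ j, 1 - x * ζ ^ j = x * (x⁻¹ - ζ ^ j) := by
      intro j; field_simp
    simp_rw [this]
    rw [Finset.prod_mul_distrib, Finset.prod_const, Finset.card_range,
      prod_sub_pow hn hζ, inv_pow]
    field_simp

lemma prod_one_sub_prim {n : ℕ} {ζ : ℂ} (hn : 0 < n) (hζ : IsPrimitiveRoot ζ n) :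
    ∏ j ∈ Finset.Ico 1 n, ((1 : ℂ) - ζ ^ j) = n := by
  have h1 : ∏ j ∈ Finset.range n, (X - C (ζ ^ j)) =
      (X - C (ζ ^ 0)) * ∏ j ∈ Finset.Ico 1 n, (X - C (ζ ^ j)) := by
    rw [Finset.range_eq_Ico, Finset.prod_eq_prod_Ico_succ_bot hn (fun j => X - C (ζ ^ j))]
  have key : (X - C 1) * ∏ j ∈ Finset.Ico 1 n, (X - C (ζ ^ j)) =
      (X - C 1) * ∑ i ∈ Finset.range n, (X : ℂ[X]) ^ i := by
    have h2 := prod_X_sub_pow hn hζ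
    rw [h1, pow_zero] at h2
    rw [h2, ← geom_sum_mul, mul_comm]
    simp
  have hXC : (X - C (1:ℂ)) ≠ 0 := X_sub_C_ne_zero 1
  have := mul_left_cancel₀ hXC key
  have := congrArg (Polynomial.eval 1) this
  simpa [Polynomial.eval_prod] using this



noncomputable def EE (t : ℂ) : ℂ := Complex.exp (↑Real.pi * Complex.I * t)

lemma EE_add (s t : ℂ) : EE (s + t) = EE s * EE t := by
  simp [EE, mul_add, Complex.exp_add]

lemma EE_neg (t : ℂ) : EE (-t) = (EE t)⁻¹ := by
  simp [EE, Complex.exp_neg]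

lemma EE_nat (j : ℕ) : EE (j : ℂ) = (-1) ^ j := by
  have h : (↑Real.pi * Complex.I * (j : ℂ)) = j * (↑Real.pi * Complex.I) := by ring
  rw [EE, h, Complex.exp_nat_mul, Complex.exp_pi_mul_I]

lemma EE_pow (t : ℂ) (j : ℕ) : EE t ^ j = EE (j * t) := by
  have h : (↑Real.pi * Complex.I * ((j : ℂ) * t)) = j * (↑Real.pi * Complex.I * t) := by ring
  rw [EE, EE, h, Complex.exp_nat_mul]

noncomputable def xx (β γ p n k : ℕ) : ℂ :=
  (EE ((γ : ℂ) * k / β) + EE (-((γ : ℂ) * k / β))) / 2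
    * EE ((2 * (p : ℂ) + γ * n) * k / ((β : ℂ) * n))

lemma xx_zero (β γ p n : ℕ) : xx β γ p n 0 = 1 := by
  simp [xx, EE]

lemma lemA (β γ p n k : ℕ) (hβ : (β : ℂ) ≠ 0) (hn : (n : ℂ) ≠ 0) :
    (2 : ℂ) - EE (2 * p * k / ((β : ℂ) * n)) - EE (2 * ((γ : ℂ) * n + p) * k / ((β : ℂ) * n))
      = 2 * (1 - xx β γ p n k) := by
  have e1 : EE (2 * ((γ : ℂ) * n + p) * k / ((β : ℂ) * n))
      = EE ((γ : ℂ) * k / β) * EE ((2 * (p : ℂ) + γ * n) * k / ((β : ℂ) * n)) := by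
    rw [← EE_add]; congr 1; field_simp; ring
  have e2 : EE (2 * (p : ℂ) * k / ((β : ℂ) * n))
      = EE (-((γ : ℂ) * k / β)) * EE ((2 * (p : ℂ) + γ * n) * k / ((β : ℂ) * n)) := by
    rw [← EE_add]; congr 1; field_simp; ring
  rw [e1, e2, xx]; ring

lemma lemB (β γ p n r j : ℕ) (hβ : (β : ℂ) ≠ 0) (hn : (n : ℂ) ≠ 0) :
    xx β γ p n (r + β * j) = xx β γ p n r * (EE (2 * p / (n : ℂ))) ^ j := by
  have hsq : ((-1 : ℂ) ^ (γ * j)) * ((-1 : ℂ) ^ (γ * j)) = 1 := by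
    rw [← mul_pow]; norm_num
  have hc1 : (γ : ℂ) * (↑(r + β * j)) / β = γ * r / β + (↑(γ * j) : ℕ) := by
    push_cast; field_simp
  have hw : (2 * (p : ℂ) + γ * n) * (↑(r + β * j)) / ((β : ℂ) * n)
      = (2 * (p : ℂ) + γ * n) * r / ((β : ℂ) * n) + ((j : ℂ) * (2 * p / n) + (↑(γ * j) : ℕ)) := by
    push_cast; field_simp
  have key1 : EE ((γ : ℂ) * (↑(r + β * j)) / β) = EE ((γ : ℂ) * r / β) * (-1) ^ (γ * j) := by
    rw [hc1, EE_add, EE_nat]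
  have key2 : EE (-((γ : ℂ) * (↑(r + β * j)) / β))
      = EE (-((γ : ℂ) * r / β)) * (-1) ^ (γ * j) := by
    rw [hc1, neg_add, EE_add, EE_neg (((γ * j : ℕ) : ℂ)), EE_nat]
    congr 1
    rw [← inv_pow]
    norm_num
  have key3 : EE ((2 * (p : ℂ) + γ * n) * (↑(r + β * j)) / ((β : ℂ) * n))
      = EE ((2 * (p : ℂ) + γ * n) * r / ((β : ℂ) * n)) * ((EE (2 * p / (n : ℂ))) ^ j * (-1) ^ (γ * j)) := by
    rw [hw, EE_add, EE_add, EE_nat, EE_pow]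
  rw [xx, xx, key1, key2, key3]
  have expand : ∀ a b c d e : ℂ,
      (a * e + b * e) / 2 * (c * (d * e)) = (a + b) / 2 * c * d * (e * e) := by
    intro a b c d e; ring
  rw [expand, hsq, mul_one]

lemma cos_complex (t : ℝ) :
    Complex.exp ((t : ℂ) * Complex.I) + Complex.exp (-(t : ℂ) * Complex.I)
      = 2 * ((Real.cos t : ℝ) : ℂ) := by
  have h : (-(t : ℂ)) * Complex.I = (-t : ℂ) * Complex.I := by ring
  rw [h, Complex.exp_mul_I, Complex.exp_mul_I, Complex.cos_neg, Complex.sin_neg,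
    Complex.ofReal_cos]
  ring

lemma xx_pow (β γ p n r : ℕ) (hβ : β ≠ 0) (hn : n ≠ 0) :
    xx β γ p n r ^ n
      = ((Real.cos (Real.pi * γ * r / β) ^ n : ℝ) : ℂ)
        * Complex.exp (((Real.pi * (2 * p + γ * n) * r / β : ℝ) : ℂ) * Complex.I) := by
  have hβc : (β : ℂ) ≠ 0 := Nat.cast_ne_zero.2 hβ
  have hnc : (n : ℂ) ≠ 0 := Nat.cast_ne_zero.2 hn
  have hβr : (β : ℝ) ≠ 0 := Nat.cast_ne_zero.2 hβ
  have h1 : EE ((γ : ℂ) * r / β) = Complex.exp (((Real.pi * γ * r / β : ℝ) : ℂ) * Complex.I) := by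
    rw [EE]; congr 1; push_cast; ring
  have h2 : EE (-((γ : ℂ) * r / β))
      = Complex.exp (-((Real.pi * γ * r / β : ℝ) : ℂ) * Complex.I) := by
    rw [EE]; congr 1; push_cast; ring
  have h3 : EE ((2 * (p : ℂ) + γ * n) * r / ((β : ℂ) * n)) ^ n
      = Complex.exp (((Real.pi * (2 * p + γ * n) * r / β : ℝ) : ℂ) * Complex.I) := by
    rw [EE_pow, EE]; congr 1; push_cast; field_simp
  rw [xx, mul_pow, h3, h1, h2, cos_complex]
  congr 1
  rw [mul_comm (2 : ℂ), mul_div_assoc, div_self (two_ne_zero), mul_one,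
    ← Complex.ofReal_pow]

lemma neg_pow_sq (m : ℕ) : ((-1 : ℂ) ^ m) * ((-1 : ℂ) ^ m) = 1 := by
  rw [← mul_pow]; norm_num

lemma lemF (β γ p n r s : ℕ) (hβ : β ≠ 0) (hn : n ≠ 0) (hrs : r + s = β) :
    (1 - xx β γ p n r ^ n) * (1 - xx β γ p n s ^ n)
      = (((1 : ℝ)
          - 2 * Real.cos (2 * Real.pi * ((p : ℝ) + γ * n / 2) * r / β)
              * Real.cos (Real.pi * γ * r / β) ^ n
          + Real.cos (Real.pi * γ * r / β) ^ (2 * n) : ℝ) : ℂ) := by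
  have hβr : (β : ℝ) ≠ 0 := Nat.cast_ne_zero.2 hβ
  set B : ℝ := Real.pi * γ * r / β with hB
  set A : ℝ := Real.pi * (2 * p + γ * n) * r / β with hA
  have hA' : 2 * Real.pi * ((p : ℝ) + γ * n / 2) * r / β = A := by rw [hA]; ring
  have hsR : (s : ℝ) = (β : ℝ) - r := by
    have : (r : ℝ) + s = β := by exact_mod_cast congrArg (Nat.cast : ℕ → ℝ) hrs
    linarith
  have h1 := xx_pow β γ p n r hβ hn
  have h2 := xx_pow β γ p n s hβ hn
  -- rewrite the s-side
  have hBs : Real.pi * γ * s / β = γ * Real.pi - B := by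
    rw [hsR, hB]; field_simp
  have hAs : Real.pi * (2 * p + γ * n) * s / β = (2 * p + γ * n : ℕ) * Real.pi - A := by
    rw [hsR, hA]; field_simp; push_cast; ring
  have hcosBs : Real.cos (Real.pi * γ * s / β) = (-1 : ℝ) ^ γ * Real.cos B := by
    rw [hBs]; exact Real.cos_nat_mul_pi_sub B γ
  have hexpAs : Complex.exp ((((2 * p + γ * n : ℕ) * Real.pi - A : ℝ) : ℂ) * Complex.I)
      = (-1 : ℂ) ^ (γ * n) * Complex.exp (-((A : ℝ) : ℂ) * Complex.I) := by
    have harg : (((2 * p + γ * n : ℕ) * Real.pi - A : ℝ) : ℂ) * Complex.I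
        = ((2 * p + γ * n : ℕ) : ℂ) * (↑Real.pi * Complex.I) + (-((A : ℝ) : ℂ) * Complex.I) := by
      push_cast; ring
    rw [harg, Complex.exp_add, Complex.exp_nat_mul, Complex.exp_pi_mul_I]
    congr 1
    rw [pow_add, pow_mul]
    norm_num
  rw [hcosBs, hAs, hexpAs] at h2
  have e1 : (((-1 : ℝ) ^ γ * Real.cos B) ^ n : ℝ) = (-1 : ℝ) ^ (γ * n) * Real.cos B ^ n := by
    rw [mul_pow, ← pow_mul]
  have h2' : xx β γ p n s ^ n
      = ((Real.cos B ^ n : ℝ) : ℂ) * Complex.exp (-((A : ℝ) : ℂ) * Complex.I) := by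
    calc xx β γ p n s ^ n
        = ((-1 : ℂ) ^ (γ * n) * (-1 : ℂ) ^ (γ * n))
            * (((Real.cos B ^ n : ℝ) : ℂ) * Complex.exp (-((A : ℝ) : ℂ) * Complex.I)) := by
          rw [h2, e1]; push_cast; ring
      _ = ((Real.cos B ^ n : ℝ) : ℂ) * Complex.exp (-((A : ℝ) : ℂ) * Complex.I) := by
          rw [neg_pow_sq, one_mul]
  rw [h1, h2', hA']
  have expand : ∀ a u v : ℂ, (1 - a * u) * (1 - a * v) = 1 - a * (u + v) + a * a * (u * v) := by
    intros; ring
  rw [expand]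
  have hmul : Complex.exp (((A : ℝ) : ℂ) * Complex.I) * Complex.exp (-((A : ℝ) : ℂ) * Complex.I)
      = 1 := by
    rw [← Complex.exp_add]
    norm_num
  rw [cos_complex A, hmul, mul_one,
    show (Real.cos B ^ (2 * n)) = Real.cos B ^ n * Real.cos B ^ n from by rw [two_mul, pow_add]]
  norm_cast
  ring

lemma split_prod (β n : ℕ) (hβ : β ≠ 0) (hn : n ≠ 0) (f : ℕ → ℂ) :
    ∏ k ∈ Finset.Icc 1 (β * n - 1), f k
      = (∏ j ∈ Finset.Ico 1 n, f (β * j))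
        * ∏ r ∈ Finset.Ico 1 β, ∏ j ∈ Finset.range n, f (r + β * j) := by
  have hβpos : 0 < β := Nat.pos_of_ne_zero hβ
  have hnpos : 0 < n := Nat.pos_of_ne_zero hn
  have h1 : Finset.Icc 1 (β * n - 1) = Finset.Ico 1 (β * n) := by
    ext k
    simp only [Finset.mem_Icc, Finset.mem_Ico]
    have : 1 ≤ β * n := Nat.one_le_iff_ne_zero.2 (Nat.mul_ne_zero hβ hn)
    omega
  rw [h1]
  have h2 : ∏ r ∈ Finset.Ico 1 β, ∏ j ∈ Finset.range n, f (r + β * j)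
      = ∏ q ∈ Finset.Ico 1 β ×ˢ Finset.range n, f (q.1 + β * q.2) := by
    rw [Finset.prod_product]
  have h3 : ∏ j ∈ Finset.Ico 1 n, f (β * j)
      = ∏ q ∈ ({0} : Finset ℕ) ×ˢ Finset.Ico 1 n, f (q.1 + β * q.2) := by
    rw [Finset.prod_product, Finset.prod_singleton]
    simp
  rw [h2, h3, ← Finset.prod_union]
  · apply Finset.prod_nbij' (fun k => (k % β, k / β)) (fun q => q.1 + β * q.2)
    · -- forward membership
      intro k hk
      simp only [Finset.mem_Ico] at hk
      simp only [Finset.mem_union, Finset.mem_product, Finset.mem_singleton,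
        Finset.mem_Ico, Finset.mem_range]
      have hdiv : k / β < n := Nat.div_lt_of_lt_mul hk.2
      rcases Nat.eq_zero_or_pos (k % β) with h0 | hpos
      · left
        refine ⟨h0, ?_, hdiv⟩
        have hk' : β * (k / β) = k := Nat.mul_div_cancel' (Nat.dvd_of_mod_eq_zero h0)
        rcases Nat.eq_zero_or_pos (k / β) with hq | hq
        · rw [hq, Nat.mul_zero] at hk'; omega
        · exact hq
      · right
        exact ⟨⟨hpos, Nat.mod_lt k hβpos⟩, hdiv⟩
    · -- backward membership
      rintro ⟨r, j⟩ hq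
      simp only [Finset.mem_union, Finset.mem_product, Finset.mem_singleton,
        Finset.mem_Ico, Finset.mem_range] at hq
      simp only [Finset.mem_Ico]
      rcases hq with ⟨rfl, hj1, hjn⟩ | ⟨⟨hr1, hrβ⟩, hjn⟩
      · constructor
        · have : β * 1 ≤ β * j := Nat.mul_le_mul_left β hj1
          omega
        · have : β * j < β * n := (mul_lt_mul_iff_right₀ hβpos).2 hjn
          omega
      · constructor
        · omega
        · have : β * (j + 1) ≤ β * n := Nat.mul_le_mul_left β hjn
          have : β * j + β ≤ β * n := by rw [Nat.mul_add, Nat.mul_one] at this; omega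
          omega
    · intro k _
      exact Nat.mod_add_div k β
    · rintro ⟨r, j⟩ hq
      simp only [Finset.mem_union, Finset.mem_product, Finset.mem_singleton,
        Finset.mem_Ico, Finset.mem_range] at hq
      have hrβ : r < β := by rcases hq with ⟨rfl, _, _⟩ | ⟨⟨_, h⟩, _⟩ <;> omega
      have e1 : (r + β * j) % β = r := by
        rw [Nat.add_mul_mod_self_left, Nat.mod_eq_of_lt hrβ]
      have e2 : (r + β * j) / β = j := by
        rw [Nat.add_mul_div_left _ _ hβpos, Nat.div_eq_of_lt hrβ]
        omega
      simp [e1, e2]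
    · intro k _
      rw [Nat.mod_add_div k β]
  · -- disjoint
    simp only [Finset.disjoint_left]
    rintro ⟨r, j⟩ h1 h2
    simp only [Finset.mem_product, Finset.mem_singleton, Finset.mem_Ico,
      Finset.mem_range] at h1 h2
    omega

lemma pair_prod (β m : ℕ) (hm : β = 2 * m + 1) (g : ℕ → ℂ) :
    ∏ r ∈ Finset.Ico 1 β, g r = ∏ r ∈ Finset.Icc 1 m, (g r * g (β - r)) := by
  have hsplit : Finset.Ico 1 β = Finset.Icc 1 m ∪ Finset.Icc (m + 1) (2 * m) := by
    ext k
    simp only [Finset.mem_Ico, Finset.mem_union, Finset.mem_Icc]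
    omega
  have hdisj : Disjoint (Finset.Icc 1 m) (Finset.Icc (m + 1) (2 * m)) := by
    simp only [Finset.disjoint_left, Finset.mem_Icc]
    intro a h1 h2
    omega
  rw [hsplit, Finset.prod_union hdisj]
  have h2 : ∏ s ∈ Finset.Icc (m + 1) (2 * m), g s = ∏ r ∈ Finset.Icc 1 m, g (β - r) := by
    apply Finset.prod_nbij' (fun s => β - s) (fun r => β - r)
    · intro s hs; simp only [Finset.mem_Icc] at *; omega
    · intro r hr; simp only [Finset.mem_Icc] at *; omega
    · intro s hs; simp only [Finset.mem_Icc] at hs; omega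
    · intro r hr; simp only [Finset.mem_Icc] at hr; omega
    · intro s hs
      simp only [Finset.mem_Icc] at hs
      congr 1
      omega
  rw [h2, ← Finset.prod_mul_distrib]

/-- Number of spanning trees in the two-generated directed circulant graph
`C→^{p, γn+p}_{βn}` for odd `β` and `gcd(p,n) = 1`:
`∏_{k=1}^{βn−1} (2 − e^{2πipk/(βn)} − e^{2πi(γn+p)k/(βn)})
  = n·2^{βn−1} ∏_{k=1}^{(β−1)/2} (1 − 2cos(2π(p+γn/2)k/β)cosⁿ(πγk/β) + cos^{2n}(πγk/β))`. -/
theorem stmt_4 (β γ p n : ℕ) (hγ1 : 1 ≤ γ) (hγβ : γ ≤ β) (hβodd : Odd β)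
    (hp : 1 ≤ p) (hn : 1 ≤ n) (hpn : Nat.gcd p n = 1) :
    ∏ k ∈ Finset.Icc 1 (β * n - 1),
        ((2 : ℂ) - Complex.exp (2 * Real.pi * Complex.I * p * k / (β * n))
          - Complex.exp (2 * Real.pi * Complex.I * (γ * n + p) * k / (β * n)))
      = (n : ℂ) * 2 ^ (β * n - 1) *
        ∏ k ∈ Finset.Icc 1 ((β - 1) / 2),
          (((1 : ℝ)
              - 2 * Real.cos (2 * Real.pi * ((p : ℝ) + γ * n / 2) * k / β)
                  * Real.cos (Real.pi * γ * k / β) ^ n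
              + Real.cos (Real.pi * γ * k / β) ^ (2 * n) : ℝ) : ℂ) := by
  obtain ⟨m, hm⟩ := hβodd
  have hβ0 : β ≠ 0 := by omega
  have hn0 : n ≠ 0 := by omega
  have hβc : (β : ℂ) ≠ 0 := Nat.cast_ne_zero.2 hβ0
  have hnc : (n : ℂ) ≠ 0 := Nat.cast_ne_zero.2 hn0
  have hζ : IsPrimitiveRoot (EE (2 * p / (n : ℂ))) n := by
    have h := Complex.isPrimitiveRoot_exp_of_coprime p n hn0 hpn
    have harg : EE (2 * p / (n : ℂ)) = Complex.exp (2 * ↑Real.pi * Complex.I * (↑p / ↑n)) := by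
      rw [EE]; congr 1; ring
    rw [harg]; exact h
  have step1 : ∀ k ∈ Finset.Icc 1 (β * n - 1),
      ((2 : ℂ) - Complex.exp (2 * ↑Real.pi * Complex.I * ↑p * ↑k / (↑β * ↑n))
        - Complex.exp (2 * ↑Real.pi * Complex.I * (↑γ * ↑n + ↑p) * ↑k / (↑β * ↑n)))
      = 2 * (1 - xx β γ p n k) := by
    intro k _
    have hx1 : Complex.exp (2 * ↑Real.pi * Complex.I * ↑p * ↑k / (↑β * ↑n))
        = EE (2 * (p : ℂ) * k / ((β : ℂ) * n)) := by rw [EE]; congr 1; ring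
    have hx2 : Complex.exp (2 * ↑Real.pi * Complex.I * (↑γ * ↑n + ↑p) * ↑k / (↑β * ↑n))
        = EE (2 * ((γ : ℂ) * n + p) * k / ((β : ℂ) * n)) := by rw [EE]; congr 1; ring
    rw [hx1, hx2]
    exact lemA β γ p n k hβc hnc
  rw [Finset.prod_congr rfl step1, Finset.prod_mul_distrib, Finset.prod_const, Nat.card_Icc]
  have hcard : β * n - 1 + 1 - 1 = β * n - 1 := by omega
  rw [hcard]
  rw [split_prod β n hβ0 hn0 (fun k => 1 - xx β γ p n k)]
  have g0 : ∀ j ∈ Finset.Ico 1 n,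
      ((1 : ℂ) - xx β γ p n (β * j)) = 1 - (EE (2 * p / (n : ℂ))) ^ j := by
    intro j _
    have hβj : β * j = 0 + β * j := by omega
    rw [hβj, lemB β γ p n 0 j hβc hnc, xx_zero, one_mul]
  rw [Finset.prod_congr rfl g0, prod_one_sub_prim (Nat.pos_of_ne_zero hn0) hζ]
  have ginner : ∀ r ∈ Finset.Ico 1 β,
      (∏ j ∈ Finset.range n, ((1 : ℂ) - xx β γ p n (r + β * j))) = 1 - xx β γ p n r ^ n := by
    intro r _
    have heq : ∀ j ∈ Finset.range n,
        ((1 : ℂ) - xx β γ p n (r + β * j)) = 1 - xx β γ p n r * (EE (2 * p / (n : ℂ))) ^ j := by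
      intro j _; rw [lemB β γ p n r j hβc hnc]
    rw [Finset.prod_congr rfl heq, prod_one_sub_mul_pow (Nat.pos_of_ne_zero hn0) hζ]
  rw [Finset.prod_congr rfl ginner]
  rw [pair_prod β m hm (fun r => 1 - xx β γ p n r ^ n)]
  have gpair : ∀ r ∈ Finset.Icc 1 m,
      (((1 : ℂ) - xx β γ p n r ^ n) * (1 - xx β γ p n (β - r) ^ n))
      = (((1 : ℝ) - 2 * Real.cos (2 * Real.pi * ((p : ℝ) + γ * n / 2) * r / β)
            * Real.cos (Real.pi * γ * r / β) ^ n
            + Real.cos (Real.pi * γ * r / β) ^ (2 * n) : ℝ) : ℂ) := by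
    intro r hr
    simp only [Finset.mem_Icc] at hr
    exact lemF β γ p n r (β - r) hβ0 hn0 (by omega)
  rw [Finset.prod_congr rfl gpair]
  rw [show (β - 1) / 2 = m from by omega]
  ring
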